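/- Let n = 2km with m ≡ 0 (mod 8) and k ≥ 2, and let (a_1 < a_2 < ... < a_m) be positive integers with Σ_{j ≡ 0,1 (mod 4)} a_j = Σ_{j ≡ 2,3 (mod 4)} a_j and a_m < n/2. Then the m-tuple (a_1, −a_3, a_5, −a_7, ..., a_{m−3}, −a_{m−1}, −a_{m−2}, a_{m−4}, −a_{m−6}, ..., −a_6, a_4, −a_2, a_m) has total sum 0 and all of its partial sums are pairwise distinct modulo n. -/

import Mathlib

private def gO (a : ℕ → ℕ) (j : ℕ) : ℤ :=
  if j % 4 = 1 then (a j : ℤ) else if j % 4 = 3 then -(a j : ℤ) else 0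

private def gE (a : ℕ → ℕ) (j : ℕ) : ℤ :=
  if j % 4 = 0 then (a j : ℤ) else if j % 4 = 2 then -(a j : ℤ) else 0

private lemma chain_aux (f : ℕ → ℤ) (b : ℕ) (hf : ∀ j, j + 1 ≤ b → f j < f (j + 1)) :
    ∀ i j, i < j → j ≤ b → f i < f j := by
  intro i j hij hjb
  induction j with
  | zero => omega
  | succ j ih =>
    have hj : f j < f (j + 1) := hf j (by omega)
    rcases Nat.lt_succ_iff_lt_or_eq.mp hij with h' | h'
    · exact lt_trans (ih h' (by omega)) hj
    · exact h' ▸ hj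

private lemma stmt16_part1 (m k n : ℕ) (hm : 0 < m) (h8 : m % 8 = 0) (hk : 2 ≤ k)
    (hn : n = 2 * k * m) (a : ℕ → ℕ)
    (hpos : ∀ i, 1 ≤ i → i ≤ m → 0 < a i)
    (hmono : ∀ i j, 1 ≤ i → i < j → j ≤ m → a i < a j)
    (hlt : a m < n / 2)
    (hbal : ∑ j ∈ (Finset.Icc 1 m).filter (fun j => j % 4 = 0 ∨ j % 4 = 1), a j =
      ∑ j ∈ (Finset.Icc 1 m).filter (fun j => j % 4 = 2 ∨ j % 4 = 3), a j)
    (d : ℕ → ℤ)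
    (hd1 : ∀ i, 1 ≤ i → i ≤ m / 2 → d i = (-1) ^ (i + 1) * (a (2 * i - 1) : ℤ))
    (hd2 : ∀ i, m / 2 < i → i < m →
      d i = (-1) ^ (i - m / 2) * (a (m - 2 * (i - m / 2)) : ℤ))
    (hdm : d m = (a m : ℤ)) :
    (∑ i ∈ Finset.Icc 1 m, d i = 0) := by
  obtain ⟨q, rfl⟩ : ∃ q, m = 8 * q := ⟨m / 8, by omega⟩
  have hq : 1 ≤ q := by omega
  simp only [show 8 * q / 2 = 4 * q from by omega] at hd1 hd2
  have hIoc : ∀ r : ℕ, Finset.Icc 1 r = Finset.Ioc 0 r :=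
    fun r => Finset.ext (fun x => by simp [Finset.mem_Icc, Finset.mem_Ioc]; omega)
  -- second-half d values
  have hso : ∀ u, 2 * u + 1 ≤ 4 * q - 1 → d (4 * q + (2 * u + 1)) = -(a (8 * q - (4 * u + 2)) : ℤ) := by
    intro u hu
    rw [hd2 _ (by omega) (by omega)]
    have e1 : 4 * q + (2 * u + 1) - 4 * q = 2 * u + 1 := by omega
    rw [e1, Odd.neg_one_pow ⟨u, by ring⟩]
    have e2 : 8 * q - 2 * (2 * u + 1) = 8 * q - (4 * u + 2) := by omega
    rw [e2]; ring
  have hse : ∀ u, 2 * u + 2 ≤ 4 * q - 1 → d (4 * q + (2 * u + 2)) = (a (8 * q - (4 * u + 4)) : ℤ) := by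
    intro u hu
    rw [hd2 _ (by omega) (by omega)]
    have e1 : 4 * q + (2 * u + 2) - 4 * q = 2 * u + 2 := by omega
    rw [e1, Even.neg_one_pow ⟨u + 1, by ring⟩]
    have e2 : 8 * q - 2 * (2 * u + 2) = 8 * q - (4 * u + 4) := by omega
    rw [e2]; ring
  -- first-half sum
  have S1 : ∀ N, N ≤ 4 * q → ∑ i ∈ Finset.Ioc 0 N, d i = ∑ j ∈ Finset.Ioc 0 (2 * N), gO a j := by
    intro N
    induction N with
    | zero => simp
    | succ N ih =>
      intro hN
      rw [Finset.sum_Ioc_succ_top (Nat.zero_le N)]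
      have e2 : 2 * (N + 1) = (2 * N + 1) + 1 := by ring
      rw [e2, Finset.sum_Ioc_succ_top (by omega), Finset.sum_Ioc_succ_top (by omega),
        ih (by omega)]
      rw [hd1 _ (by omega) (by omega)]
      have e3 : 2 * (N + 1) - 1 = 2 * N + 1 := by omega
      rw [e3]
      rcases Nat.even_or_odd N with ⟨u, rfl⟩ | ⟨u, rfl⟩
      · have m1 : (2 * (u + u) + 1) % 4 = 1 := by omega
        have m2 : (2 * (u + u) + 1 + 1) % 4 = 2 := by omega
        simp only [gO, m1, m2]
        norm_num
        rw [Even.neg_one_pow ⟨u + 1, by ring⟩, one_mul]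
      · have m1 : (2 * (2 * u + 1) + 1) % 4 = 3 := by omega
        have m2 : (2 * (2 * u + 1) + 1 + 1) % 4 = 0 := by omega
        simp only [gO, m1, m2]
        norm_num
        rw [Odd.neg_one_pow ⟨u + 1, by ring⟩, neg_one_mul]
  -- second-half sum
  have S23 : ∀ T, T ≤ 4 * q - 1 →
      ∑ i ∈ Finset.Ioc (4 * q) (4 * q + T), d i
        = ∑ j ∈ Finset.Ioc (8 * q - 2 * T - 1) (8 * q - 1), gE a j := by
    intro T
    induction T with
    | zero => simp
    | succ T ih =>
      intro hT
      have e1 : 4 * q + (T + 1) = (4 * q + T) + 1 := by ring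
      rw [e1, Finset.sum_Ioc_succ_top (by omega), ih (by omega)]
      have e2 : ∑ j ∈ Finset.Ioc (8 * q - 2 * (T + 1) - 1) (8 * q - 1), gE a j
          = ∑ j ∈ Finset.Ioc (8 * q - 2 * (T + 1) - 1) (8 * q - 2 * T - 1), gE a j
            + ∑ j ∈ Finset.Ioc (8 * q - 2 * T - 1) (8 * q - 1), gE a j :=
        (Finset.sum_Ioc_consecutive _ (by omega) (by omega)).symm
      rw [e2]
      have e5 : Finset.Ioc (8 * q - 2 * (T + 1) - 1) (8 * q - 2 * T - 1)
          = insert (8 * q - 2 * (T + 1)) {8 * q - 2 * T - 1} :=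
        Finset.ext (fun x => by
          simp only [Finset.mem_Ioc, Finset.mem_insert, Finset.mem_singleton]; omega)
      rw [e5, Finset.sum_insert (by simp only [Finset.mem_singleton]; omega),
        Finset.sum_singleton]
      have godd : gE a (8 * q - 2 * T - 1) = 0 := by
        have h1 : ¬ ((8 * q - 2 * T - 1) % 4 = 0) := by omega
        have h2 : ¬ ((8 * q - 2 * T - 1) % 4 = 2) := by omega
        simp [gE, h1, h2]
      rw [godd]
      rcases Nat.even_or_odd T with ⟨u, rfl⟩ | ⟨u, rfl⟩
      · rw [show 4 * q + (u + u) + 1 = 4 * q + (2 * u + 1) from by omega, hso u (by omega)]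
        have hm2 : (8 * q - 2 * (u + u + 1)) % 4 = 2 := by omega
        rw [show 8 * q - (4 * u + 2) = 8 * q - 2 * (u + u + 1) from by omega]
        simp only [gE, hm2]
        norm_num
        ring
      · rw [show 4 * q + (2 * u + 1) + 1 = 4 * q + (2 * u + 2) from by omega, hse u (by omega)]
        have hm2 : (8 * q - 2 * (2 * u + 1 + 1)) % 4 = 0 := by omega
        rw [show 8 * q - (4 * u + 4) = 8 * q - 2 * (2 * u + 1 + 1) from by omega]
        simp only [gE, hm2]
        norm_num
        ring
  -- assemble
  rw [hIoc]
  have split1 : ∑ i ∈ Finset.Ioc 0 (8 * q), d i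
      = ∑ i ∈ Finset.Ioc 0 (4 * q), d i + ∑ i ∈ Finset.Ioc (4 * q) (8 * q - 1), d i
        + d (8 * q) := by
    rw [show 8 * q = (8 * q - 1) + 1 from by omega, Finset.sum_Ioc_succ_top (by omega)]
    rw [← Finset.sum_Ioc_consecutive _ (by omega : 0 ≤ 4 * q) (by omega : 4 * q ≤ 8 * q - 1)]
    rw [show (8 * q - 1) + 1 = 8 * q from by omega]
  rw [split1, S1 _ (le_refl _)]
  have e4 : 4 * q + (4 * q - 1) = 8 * q - 1 := by omega
  have := S23 (4 * q - 1) (le_refl _)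
  rw [e4] at this
  rw [this, show 8 * q - 2 * (4 * q - 1) - 1 = 1 from by omega]
  rw [show 2 * (4 * q) = 8 * q from by omega]
  have hgE1 : gE a 1 = 0 := by simp [gE]
  have hgEm : gE a (8 * q) = (a (8 * q) : ℤ) := by
    have : (8 * q) % 4 = 0 := by omega
    simp [gE, this]
  have eE : ∑ j ∈ Finset.Ioc 0 (8 * q), gE a j
      = ∑ j ∈ Finset.Ioc 1 (8 * q - 1), gE a j + (a (8 * q) : ℤ) := by
    rw [show 8 * q = (8 * q - 1) + 1 from by omega, Finset.sum_Ioc_succ_top (by omega)]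
    rw [← Finset.sum_Ioc_consecutive _ (by omega : 0 ≤ 1) (by omega : 1 ≤ 8 * q - 1)]
    rw [show (8 * q - 1) + 1 = 8 * q from by omega, hgEm]
    have h01 : Finset.Ioc 0 1 = {1} :=
      Finset.ext (fun x => by simp only [Finset.mem_Ioc, Finset.mem_singleton]; omega)
    rw [h01, Finset.sum_singleton, hgE1]
    ring
  have key : ∀ j : ℕ, gO a j + gE a j
      = (if j % 4 = 0 ∨ j % 4 = 1 then (a j : ℤ) else 0)
        - (if j % 4 = 2 ∨ j % 4 = 3 then (a j : ℤ) else 0) := by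
    intro j
    have h4 : j % 4 = 0 ∨ j % 4 = 1 ∨ j % 4 = 2 ∨ j % 4 = 3 := by omega
    rcases h4 with h | h | h | h <;> simp [gO, gE, h]
  have hcast := congrArg (Nat.cast : ℕ → ℤ) hbal
  rw [Finset.sum_filter, Finset.sum_filter] at hcast
  push_cast at hcast
  rw [hIoc] at hcast
  rw [hdm]
  have eE' : ∑ j ∈ Finset.Ioc 1 (8 * q - 1), gE a j
      = ∑ j ∈ Finset.Ioc 0 (8 * q), gE a j - (a (8 * q) : ℤ) := by rw [eE]; ring
  rw [eE']
  have comb : ∑ j ∈ Finset.Ioc 0 (8 * q), gO a j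
      + (∑ j ∈ Finset.Ioc 0 (8 * q), gE a j - (a (8 * q) : ℤ)) + (a (8 * q) : ℤ)
      = ∑ j ∈ Finset.Ioc 0 (8 * q), (gO a j + gE a j) := by
    rw [Finset.sum_add_distrib]; ring
  rw [comb, Finset.sum_congr rfl (fun j _ => key j), Finset.sum_sub_distrib, hcast]
  ring

set_option maxHeartbeats 1600000 in
private lemma stmt16_part2 (k n : ℕ) (q : ℕ) (hq : 1 ≤ q) (hk : 2 ≤ k)
    (hn : n = 2 * k * (8 * q)) (a : ℕ → ℕ) (d : ℕ → ℤ)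
    (hpos : ∀ i, 1 ≤ i → i ≤ 8 * q → 0 < a i)
    (hmono : ∀ i j, 1 ≤ i → i < j → j ≤ 8 * q → a i < a j)
    (hlt : a (8 * q) < n / 2)
    (hd1 : ∀ i, 1 ≤ i → i ≤ 4 * q → d i = (-1) ^ (i + 1) * (a (2 * i - 1) : ℤ))
    (hd2 : ∀ i, 4 * q < i → i < 8 * q →
      d i = (-1) ^ (i - 4 * q) * (a (8 * q - 2 * (i - 4 * q)) : ℤ))
    (hdm : d (8 * q) = (a (8 * q) : ℤ))
    (htotal : ∑ i ∈ Finset.Ioc 0 (8 * q), d i = 0) :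
    (∀ r s, 1 ≤ r → r < s → s ≤ 8 * q →
      ¬ Int.ModEq (n : ℤ) (∑ i ∈ Finset.Ioc 0 r, d i) (∑ i ∈ Finset.Ioc 0 s, d i)) := by
  have hso : ∀ u, 2 * u + 1 ≤ 4 * q - 1 → d (4 * q + (2 * u + 1)) = -(a (8 * q - (4 * u + 2)) : ℤ) := by
    intro u hu
    rw [hd2 _ (by omega) (by omega)]
    rw [show 4 * q + (2 * u + 1) - 4 * q = 2 * u + 1 from by omega,
      Odd.neg_one_pow ⟨u, by ring⟩,
      show 8 * q - 2 * (2 * u + 1) = 8 * q - (4 * u + 2) from by omega]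
    ring
  have hse : ∀ u, 2 * u + 2 ≤ 4 * q - 1 → d (4 * q + (2 * u + 2)) = (a (8 * q - (4 * u + 4)) : ℤ) := by
    intro u hu
    rw [hd2 _ (by omega) (by omega)]
    rw [show 4 * q + (2 * u + 2) - 4 * q = 2 * u + 2 from by omega,
      Even.neg_one_pow ⟨u + 1, by ring⟩,
      show 8 * q - 2 * (2 * u + 2) = 8 * q - (4 * u + 4) from by omega]
    ring
  have hdo : ∀ j, 2 * j + 1 ≤ 4 * q → d (2 * j + 1) = (a (4 * j + 1) : ℤ) := by
    intro j hj
    rw [hd1 _ (by omega) (by omega),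
      show 2 * (2 * j + 1) - 1 = 4 * j + 1 from by omega,
      Even.neg_one_pow ⟨j + 1, by ring⟩, one_mul]
  have hde : ∀ j, 2 * j + 2 ≤ 4 * q → d (2 * j + 2) = -(a (4 * j + 3) : ℤ) := by
    intro j hj
    rw [hd1 _ (by omega) (by omega),
      show 2 * (2 * j + 2) - 1 = 4 * j + 3 from by omega,
      Odd.neg_one_pow ⟨j + 1, by ring⟩]
    ring
  obtain ⟨P, hPe⟩ : ∃ P : ℕ → ℤ, ∀ x, P x = ∑ i ∈ Finset.Ioc 0 x, d i :=
    ⟨_, fun _ => rfl⟩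
  have hPs : ∀ r : ℕ, P (r + 1) = P r + d (r + 1) := by
    intro r
    rw [hPe, hPe]
    exact Finset.sum_Ioc_succ_top (Nat.zero_le r) d
  have hP1 : P 1 = (a 1 : ℤ) := by
    have h0 : P 0 = 0 := by rw [hPe]; simp
    have h1 := hPs 0
    have h2 := hdo 0 (by omega)
    norm_num at h1 h2
    rw [h1, h0, h2, zero_add]
  -- cast monotonicity helper
  have hm' : ∀ i j, 1 ≤ i → i < j → j ≤ 8 * q → (a i : ℤ) < (a j : ℤ) :=
    fun i j h1 h2 h3 => by exact_mod_cast hmono i j h1 h2 h3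
  -- first half odd: positivity and ≤ a(4j+1)
  have A : ∀ j, 2 * j + 1 ≤ 4 * q → 0 < P (2 * j + 1) ∧ P (2 * j + 1) ≤ (a (4 * j + 1) : ℤ) := by
    intro j
    induction j with
    | zero =>
      intro _
      refine ⟨?_, ?_⟩
      · norm_num [hP1]
        exact hpos 1 (by omega) (by omega)
      · norm_num [hP1]
    | succ j ih =>
      intro hj
      obtain ⟨ih1, ih2⟩ := ih (by omega)
      have key : P (2 * (j + 1) + 1) = P (2 * j + 1) + d (2 * j + 2) + d (2 * j + 3) := by
        rw [show 2 * (j + 1) + 1 = (2 * j + 2) + 1 from by ring, hPs,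
          show 2 * j + 2 = (2 * j + 1) + 1 from by ring, hPs]
      have hd2' : d (2 * j + 2) = -(a (4 * j + 3) : ℤ) := hde j (by omega)
      have hd3' : d (2 * j + 3) = (a (4 * j + 5) : ℤ) := by
        have := hdo (j + 1) (by omega)
        rw [show 2 * (j + 1) + 1 = 2 * j + 3 from by ring,
          show 4 * (j + 1) + 1 = 4 * j + 5 from by ring] at this
        exact this
      have m1 := hm' (4 * j + 1) (4 * j + 3) (by omega) (by omega) (by omega)
      have m2 := hm' (4 * j + 3) (4 * j + 5) (by omega) (by omega) (by omega)
      rw [show 4 * (j + 1) + 1 = 4 * j + 5 from by omega]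
      constructor
      · rw [key, hd2', hd3']; linarith
      · rw [key, hd2', hd3']; linarith
  have Astep : ∀ j, 2 * (j + 1) + 1 ≤ 4 * q → P (2 * j + 1) < P (2 * (j + 1) + 1) := by
    intro j hj
    have key : P (2 * (j + 1) + 1) = P (2 * j + 1) + d (2 * j + 2) + d (2 * j + 3) := by
      rw [show 2 * (j + 1) + 1 = (2 * j + 2) + 1 from by ring, hPs,
        show 2 * j + 2 = (2 * j + 1) + 1 from by ring, hPs]
    have hd2' : d (2 * j + 2) = -(a (4 * j + 3) : ℤ) := hde j (by omega)
    have hd3' : d (2 * j + 3) = (a (4 * j + 5) : ℤ) := by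
      have := hdo (j + 1) (by omega)
      rw [show 2 * (j + 1) + 1 = 2 * j + 3 from by ring,
        show 4 * (j + 1) + 1 = 4 * j + 5 from by ring] at this
      exact this
    have m2 := hm' (4 * j + 3) (4 * j + 5) (by omega) (by omega) (by omega)
    rw [key, hd2', hd3']; linarith
  have Achain : ∀ i j, i < j → j ≤ 2 * q - 1 → P (2 * i + 1) < P (2 * j + 1) :=
    fun i j hij hj => chain_aux (fun u => P (2 * u + 1)) (2 * q - 1)
      (fun u hu => Astep u (by omega)) i j hij hj
  -- first half even
  have Beq : ∀ j, 2 * j + 2 ≤ 4 * q → P (2 * j + 2) = P (2 * j + 1) - (a (4 * j + 3) : ℤ) := by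
    intro j hj
    rw [show 2 * j + 2 = (2 * j + 1) + 1 from by ring, hPs, hde j (by omega)]
    ring
  have Bneg : ∀ j, 2 * j + 2 ≤ 4 * q → P (2 * j + 2) < 0 := by
    intro j hj
    obtain ⟨_, h2⟩ := A j (by omega)
    have m1 := hm' (4 * j + 1) (4 * j + 3) (by omega) (by omega) (by omega)
    rw [Beq j hj]; linarith
  have Bstep : ∀ j, 2 * (j + 1) + 2 ≤ 4 * q → P (2 * (j + 1) + 2) < P (2 * j + 2) := by
    intro j hj
    have key : P (2 * (j + 1) + 2) = P (2 * j + 2) + d (2 * j + 3) + d (2 * j + 4) := by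
      rw [show 2 * (j + 1) + 2 = (2 * j + 3) + 1 from by ring, hPs,
        show 2 * j + 3 = (2 * j + 2) + 1 from by ring, hPs]
    have hd3' : d (2 * j + 3) = (a (4 * j + 5) : ℤ) := by
      have := hdo (j + 1) (by omega)
      rw [show 2 * (j + 1) + 1 = 2 * j + 3 from by ring,
        show 4 * (j + 1) + 1 = 4 * j + 5 from by ring] at this
      exact this
    have hd4' : d (2 * j + 4) = -(a (4 * j + 7) : ℤ) := by
      have := hde (j + 1) (by omega)
      rw [show 2 * (j + 1) + 2 = 2 * j + 4 from by ring,
        show 4 * (j + 1) + 3 = 4 * j + 7 from by ring] at this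
      exact this
    have m2 := hm' (4 * j + 5) (4 * j + 7) (by omega) (by omega) (by omega)
    rw [key, hd3', hd4']; linarith
  have Bchain : ∀ i j, i < j → j ≤ 2 * q - 1 → P (2 * j + 2) < P (2 * i + 2) := by
    intro i j hij hj
    have := chain_aux (fun u => -(P (2 * u + 2))) (2 * q - 1)
      (fun u hu => by
        show -(P (2 * u + 2)) < -(P (2 * (u + 1) + 2))
        have := Bstep u (by omega); linarith) i j hij hj
    have h2 : -(P (2 * i + 2)) < -(P (2 * j + 2)) := this
    linarith
  -- second half odd t
  have C3step : ∀ u, 2 * (u + 1) + 1 ≤ 4 * q - 1 →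
      P (4 * q + (2 * u + 1)) < P (4 * q + (2 * (u + 1) + 1)) := by
    intro u hu
    have key : P (4 * q + (2 * (u + 1) + 1))
        = P (4 * q + (2 * u + 1)) + d (4 * q + (2 * u + 2)) + d (4 * q + (2 * (u + 1) + 1)) := by
      rw [show 4 * q + (2 * (u + 1) + 1) = (4 * q + (2 * u + 2)) + 1 from by ring, hPs,
        show 4 * q + (2 * u + 2) = (4 * q + (2 * u + 1)) + 1 from by ring, hPs]
    have h1 := hse u (by omega)
    have h2 := hso (u + 1) (by omega)
    rw [show 2 * (u + 1) + 1 = 2 * u + 3 from by ring] at key h2 ⊢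
    rw [show 8 * q - (4 * (u + 1) + 2) = 8 * q - (4 * u + 6) from by omega] at h2
    have m2 := hm' (8 * q - (4 * u + 6)) (8 * q - (4 * u + 4)) (by omega) (by omega) (by omega)
    rw [key, h1, h2]; linarith
  have C3chain : ∀ i j, i < j → j ≤ 2 * q - 1 →
      P (4 * q + (2 * i + 1)) < P (4 * q + (2 * j + 1)) :=
    fun i j hij hj => chain_aux (fun u => P (4 * q + (2 * u + 1))) (2 * q - 1)
      (fun u hu => C3step u (by omega)) i j hij hj
  -- second half even t
  have C4eq : ∀ u, 2 * u + 2 ≤ 4 * q - 1 →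
      P (4 * q + (2 * u + 2)) = P (4 * q + (2 * u + 1)) + (a (8 * q - (4 * u + 4)) : ℤ) := by
    intro u hu
    rw [show 4 * q + (2 * u + 2) = (4 * q + (2 * u + 1)) + 1 from by ring, hPs,
      show 4 * q + (2 * u + 1) + 1 = 4 * q + (2 * u + 2) from by ring, hse u (by omega)]
  have C4step : ∀ u, 2 * (u + 1) + 2 ≤ 4 * q - 1 →
      P (4 * q + (2 * (u + 1) + 2)) < P (4 * q + (2 * u + 2)) := by
    intro u hu
    have key : P (4 * q + (2 * (u + 1) + 2))
        = P (4 * q + (2 * u + 2)) + d (4 * q + (2 * u + 3)) + d (4 * q + (2 * u + 4)) := by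
      rw [show 4 * q + (2 * (u + 1) + 2) = (4 * q + (2 * u + 3)) + 1 from by ring, hPs,
        show 4 * q + (2 * u + 3) = (4 * q + (2 * u + 2)) + 1 from by ring, hPs]
      congr 2
    have h1 := hso (u + 1) (by omega)
    rw [show 2 * (u + 1) + 1 = 2 * u + 3 from by ring,
      show 8 * q - (4 * (u + 1) + 2) = 8 * q - (4 * u + 6) from by omega] at h1
    have h2 := hse (u + 1) (by omega)
    rw [show 2 * (u + 1) + 2 = 2 * u + 4 from by ring,
      show 8 * q - (4 * (u + 1) + 4) = 8 * q - (4 * u + 8) from by omega] at h2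
    have m2 := hm' (8 * q - (4 * u + 8)) (8 * q - (4 * u + 6)) (by omega) (by omega) (by omega)
    rw [key, h1, h2]; linarith
  have C4chain : ∀ i j, i < j → j ≤ 2 * q - 2 →
      P (4 * q + (2 * j + 2)) < P (4 * q + (2 * i + 2)) := by
    intro i j hij hj
    have := chain_aux (fun u => -(P (4 * q + (2 * u + 2)))) (2 * q - 2)
      (fun u hu => by
        show -(P (4 * q + (2 * u + 2))) < -(P (4 * q + (2 * (u + 1) + 2)))
        have := C4step u (by omega); linarith) i j hij hj
    have h2 : -(P (4 * q + (2 * i + 2))) < -(P (4 * q + (2 * j + 2))) := this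
    linarith
  -- boundary facts
  have G4 : P (4 * q) < 0 := by
    have := Bneg (2 * q - 1) (by omega)
    rwa [show 2 * (2 * q - 1) + 2 = 4 * q from by omega] at this
  have G5 : 0 < P (4 * q - 1) := by
    have := (A (2 * q - 1) (by omega)).1
    rwa [show 2 * (2 * q - 1) + 1 = 4 * q - 1 from by omega] at this
  have hP41 : P (4 * q + 1) = P (4 * q) - (a (8 * q - 2) : ℤ) := by
    have h := hso 0 (by omega)
    norm_num at h
    rw [hPs (4 * q), h]
    ring
  have G7 : P (4 * q + 1) < P (4 * q) := by
    have h2 : 0 < a (8 * q - 2) := hpos _ (by omega) (by omega)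
    have h3 : (0 : ℤ) < (a (8 * q - 2) : ℤ) := by exact_mod_cast h2
    rw [hP41]; linarith
  have G3 : P (4 * q + 2) < P (4 * q) := by
    have h := C4eq 0 (by omega)
    norm_num at h
    have m2 := hm' (8 * q - 4) (8 * q - 2) (by omega) (by omega) (by omega)
    rw [h, hP41]; linarith
  have G1 : P (8 * q - 1) < P (8 * q - 2) := by
    have h := hso (2 * q - 1) (by omega)
    rw [show 4 * q + (2 * (2 * q - 1) + 1) = 8 * q - 1 from by omega,
      show 8 * q - (4 * (2 * q - 1) + 2) = 2 from by omega] at h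
    have hstep : P (8 * q - 1) = P (8 * q - 2) + d (8 * q - 1) := by
      rw [show 8 * q - 1 = (8 * q - 2) + 1 from by omega]
      exact hPs _
    have h2 : 0 < a 2 := hpos _ (by omega) (by omega)
    have h3 : (0 : ℤ) < (a 2 : ℤ) := by exact_mod_cast h2
    rw [hstep, h]; linarith
  have G2 : P (8 * q - 2) ≤ P (4 * q + 2) := by
    have e : 8 * q - 2 = 4 * q + (2 * (2 * q - 2) + 2) := by omega
    rcases Nat.eq_zero_or_pos (2 * q - 2) with h0 | hpos2
    · rw [e, h0]
    · have := C4chain 0 (2 * q - 2) (by omega) (le_refl _)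
      norm_num at this
      rw [e]
      exact this.le
  have G6 : P (4 * q + 1) ≤ P (8 * q - 1) := by
    have := C3chain 0 (2 * q - 1) (by omega) (le_refl _)
    norm_num at this
    rw [show 4 * q + (2 * (2 * q - 1) + 1) = 8 * q - 1 from by omega] at this
    exact this.le
  -- interval lemmas
  have K1 : ∀ j, j ≤ 2 * q - 1 → 0 < P (2 * j + 1) ∧ P (2 * j + 1) ≤ P (4 * q - 1) := by
    intro j hj
    refine ⟨(A j (by omega)).1, ?_⟩
    rcases eq_or_lt_of_le hj with rfl | hlt2
    · rw [show 2 * (2 * q - 1) + 1 = 4 * q - 1 from by omega]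
    · have := Achain j (2 * q - 1) hlt2 (le_refl _)
      rw [show 2 * (2 * q - 1) + 1 = 4 * q - 1 from by omega] at this
      exact this.le
  have K2 : ∀ j, j ≤ 2 * q - 1 → P (4 * q) ≤ P (2 * j + 2) ∧ P (2 * j + 2) < 0 := by
    intro j hj
    refine ⟨?_, Bneg j (by omega)⟩
    rcases eq_or_lt_of_le hj with rfl | hlt2
    · rw [show 2 * (2 * q - 1) + 2 = 4 * q from by omega]
    · have := Bchain j (2 * q - 1) hlt2 (le_refl _)
      rw [show 2 * (2 * q - 1) + 2 = 4 * q from by omega] at this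
      exact this.le
  have K3 : ∀ u, u ≤ 2 * q - 1 →
      P (4 * q + 1) ≤ P (4 * q + (2 * u + 1)) ∧ P (4 * q + (2 * u + 1)) ≤ P (8 * q - 1) := by
    intro u hu
    constructor
    · rcases Nat.eq_zero_or_pos u with rfl | hu0
      · norm_num
      · have := C3chain 0 u hu0 hu
        norm_num at this
        exact this.le
    · rcases eq_or_lt_of_le hu with rfl | hlt2
      · rw [show 4 * q + (2 * (2 * q - 1) + 1) = 8 * q - 1 from by omega]
      · have := C3chain u (2 * q - 1) hlt2 (le_refl _)
        rw [show 4 * q + (2 * (2 * q - 1) + 1) = 8 * q - 1 from by omega] at this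
        exact this.le
  have K4 : ∀ u, u ≤ 2 * q - 2 →
      P (8 * q - 2) ≤ P (4 * q + (2 * u + 2)) ∧ P (4 * q + (2 * u + 2)) ≤ P (4 * q + 2) := by
    intro u hu
    constructor
    · rcases eq_or_lt_of_le hu with rfl | hlt2
      · rw [show 4 * q + (2 * (2 * q - 2) + 2) = 8 * q - 2 from by omega]
      · have := C4chain u (2 * q - 2) hlt2 (le_refl _)
        rw [show 4 * q + (2 * (2 * q - 2) + 2) = 8 * q - 2 from by omega] at this
        exact this.le
    · rcases Nat.eq_zero_or_pos u with rfl | hu0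
      · norm_num
      · have := C4chain 0 u hu0 hu
        norm_num at this
        exact this.le
  -- classification
  have hcase : ∀ x, 1 ≤ x → x < 8 * q →
      (∃ j, j ≤ 2 * q - 1 ∧ x = 2 * j + 1) ∨ (∃ j, j ≤ 2 * q - 1 ∧ x = 2 * j + 2) ∨
      (∃ u, u ≤ 2 * q - 1 ∧ x = 4 * q + (2 * u + 1)) ∨
      (∃ u, u ≤ 2 * q - 2 ∧ x = 4 * q + (2 * u + 2)) := by
    intro x h1 h2
    by_cases hx : x ≤ 4 * q
    · rcases Nat.even_or_odd x with ⟨u, hu⟩ | ⟨u, hu⟩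
      · exact Or.inr (Or.inl ⟨u - 1, by omega, by omega⟩)
      · exact Or.inl ⟨u, by omega, by omega⟩
    · rcases Nat.even_or_odd (x - 4 * q) with ⟨u, hu⟩ | ⟨u, hu⟩
      · exact Or.inr (Or.inr (Or.inr ⟨u - 1, by omega, by omega⟩))
      · exact Or.inr (Or.inr (Or.inl ⟨u, by omega, by omega⟩))
  have hPm : P (8 * q) = 0 := by rw [hPe]; exact htotal
  -- global bounds
  have hglob : ∀ x, 1 ≤ x → x ≤ 8 * q → P (4 * q + 1) ≤ P x ∧ P x ≤ P (4 * q - 1) := by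
    intro x h1 h2
    rcases eq_or_lt_of_le h2 with rfl | h2'
    · rw [hPm]
      constructor <;> linarith [G7, G4, G5]
    · rcases hcase x h1 h2' with ⟨j, hj, rfl⟩ | ⟨j, hj, rfl⟩ | ⟨u, hu, rfl⟩ | ⟨u, hu, rfl⟩
      · exact ⟨by linarith [(K1 j hj).1, G7, G4], (K1 j hj).2⟩
      · exact ⟨by linarith [(K2 j hj).1, G7], by linarith [(K2 j hj).2, G5]⟩
      · exact ⟨(K3 u hu).1, by linarith [(K3 u hu).2, G1, G2, G3, G4, G5]⟩
      · exact ⟨by linarith [(K4 u hu).1, G6, G1], by linarith [(K4 u hu).2, G3, G4, G5]⟩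
  -- distinctness
  have hne : ∀ r s, 1 ≤ r → r < s → s ≤ 8 * q → P r ≠ P s := by
    intro r s h1 h2 h3
    rcases eq_or_lt_of_le h3 with rfl | h3'
    · rw [hPm]
      rcases hcase r h1 (by omega) with ⟨j, hj, rfl⟩ | ⟨j, hj, rfl⟩ | ⟨u, hu, rfl⟩ | ⟨u, hu, rfl⟩
      · exact ne_of_gt (K1 j hj).1
      · exact ne_of_lt (K2 j hj).2
      · intro hE; linarith [(K3 u hu).2, G1, G2, G3, G4]
      · intro hE; linarith [(K4 u hu).2, G3, G4]
    · rcases hcase r h1 (by omega) with ⟨j1, hj1, rfl⟩ | ⟨j1, hj1, rfl⟩ | ⟨u1, hu1, rfl⟩ | ⟨u1, hu1, rfl⟩ <;>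
        rcases hcase s (by omega) h3' with ⟨j2, hj2, rfl⟩ | ⟨j2, hj2, rfl⟩ | ⟨u2, hu2, rfl⟩ | ⟨u2, hu2, rfl⟩
      · intro hE; have := Achain j1 j2 (by omega) hj2; linarith
      · intro hE; linarith [(K1 j1 hj1).1, (K2 j2 hj2).2]
      · intro hE; linarith [(K1 j1 hj1).1, (K3 u2 hu2).2, G1, G2, G3, G4]
      · intro hE; linarith [(K1 j1 hj1).1, (K4 u2 hu2).2, G3, G4]
      · intro hE; linarith [(K2 j1 hj1).2, (K1 j2 hj2).1]
      · intro hE; have := Bchain j1 j2 (by omega) hj2; linarith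
      · intro hE; linarith [(K2 j1 hj1).1, (K3 u2 hu2).2, G1, G2, G3]
      · intro hE; linarith [(K2 j1 hj1).1, (K4 u2 hu2).2, G3]
      · intro hE; linarith [(K3 u1 hu1).2, (K1 j2 hj2).1, G1, G2, G3, G4]
      · intro hE; linarith [(K3 u1 hu1).2, (K2 j2 hj2).1, G1, G2, G3]
      · intro hE; have := C3chain u1 u2 (by omega) hu2; linarith
      · intro hE; linarith [(K3 u1 hu1).2, (K4 u2 hu2).1, G1]
      · intro hE; linarith [(K4 u1 hu1).2, (K1 j2 hj2).1, G3, G4]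
      · intro hE; linarith [(K4 u1 hu1).2, (K2 j2 hj2).1, G3]
      · intro hE; linarith [(K4 u1 hu1).1, (K3 u2 hu2).2, G1]
      · intro hE; have := C4chain u1 u2 (by omega) hu2; linarith
  -- spread bound
  have hd4q : d (4 * q) = -(a (8 * q - 1) : ℤ) := by
    have := hde (2 * q - 1) (by omega)
    rwa [show 2 * (2 * q - 1) + 2 = 4 * q from by omega,
      show 4 * (2 * q - 1) + 3 = 8 * q - 1 from by omega] at this
  have hspread : P (4 * q - 1) - P (4 * q + 1) = (a (8 * q - 1) : ℤ) + (a (8 * q - 2) : ℤ) := by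
    have h1 := hPs (4 * q - 1)
    rw [show (4 * q - 1) + 1 = 4 * q from by omega] at h1
    rw [hd4q] at h1
    linarith [hP41, h1]
  have hnlt : (a (8 * q - 1) : ℤ) + (a (8 * q - 2) : ℤ) < (n : ℤ) := by
    have h1 := hmono (8 * q - 2) (8 * q - 1) (by omega) (by omega) (by omega)
    have h2 := hmono (8 * q - 1) (8 * q) (by omega) (by omega) (by omega)
    have h3 : a (8 * q - 1) + a (8 * q - 2) < n := by omega
    exact_mod_cast h3
  -- conclusion
  intro r s h1 h2 h3
  rw [← hPe r, ← hPe s]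
  intro hmod
  have hdvd : (n : ℤ) ∣ (P s - P r) := Int.ModEq.dvd hmod
  have hb1 := hglob r h1 (by omega)
  have hb2 := hglob s (by omega) h3
  have habs : |P s - P r| < (n : ℤ) := by
    rw [abs_lt]
    constructor <;> linarith [hspread, hnlt, hb1.1, hb1.2, hb2.1, hb2.2]
  have hz := Int.eq_zero_of_abs_lt_dvd hdvd habs
  exact hne r s h1 h2 h3 (by linarith)

/-- Let `n = 2km` with `m ≡ 0 (mod 8)` and `k ≥ 2`, and let `a_1 < a_2 < … < a_m` be
positive integers with `a_m < n/2` satisfying the column-balance identity. Then the signed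
`m`-tuple `(a_1, -a_3, a_5, …, -a_{m-1}, -a_{m-2}, a_{m-4}, …, a_4, -a_2, a_m)` has total
sum `0` and all of its partial sums are pairwise distinct modulo `n`. -/
theorem stmt16 (m k n : ℕ) (hm : 0 < m) (h8 : m % 8 = 0) (hk : 2 ≤ k)
    (hn : n = 2 * k * m) (a : ℕ → ℕ)
    (hpos : ∀ i, 1 ≤ i → i ≤ m → 0 < a i)
    (hmono : ∀ i j, 1 ≤ i → i < j → j ≤ m → a i < a j)
    (hlt : a m < n / 2)
    (hbal : ∑ j ∈ (Finset.Icc 1 m).filter (fun j => j % 4 = 0 ∨ j % 4 = 1), a j =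
      ∑ j ∈ (Finset.Icc 1 m).filter (fun j => j % 4 = 2 ∨ j % 4 = 3), a j)
    (d : ℕ → ℤ)
    (hd1 : ∀ i, 1 ≤ i → i ≤ m / 2 → d i = (-1) ^ (i + 1) * (a (2 * i - 1) : ℤ))
    (hd2 : ∀ i, m / 2 < i → i < m →
      d i = (-1) ^ (i - m / 2) * (a (m - 2 * (i - m / 2)) : ℤ))
    (hdm : d m = (a m : ℤ)) :
    (∑ i ∈ Finset.Icc 1 m, d i = 0) ∧
    (∀ r s, 1 ≤ r → r < s → s ≤ m →
      ¬ Int.ModEq (n : ℤ) (∑ i ∈ Finset.Icc 1 r, d i) (∑ i ∈ Finset.Icc 1 s, d i)) := by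
  have h1 : ∑ i ∈ Finset.Icc 1 m, d i = 0 :=
    stmt16_part1 m k n hm h8 hk hn a hpos hmono hlt hbal d hd1 hd2 hdm
  refine ⟨h1, ?_⟩
  obtain ⟨q, rfl⟩ : ∃ q, m = 8 * q := ⟨m / 8, by omega⟩
  have hq : 1 ≤ q := by omega
  simp only [show 8 * q / 2 = 4 * q from by omega] at hd1 hd2
  have hIoc : ∀ r : ℕ, Finset.Icc 1 r = Finset.Ioc 0 r :=
    fun r => Finset.ext (fun x => by simp [Finset.mem_Icc, Finset.mem_Ioc]; omega)
  have htotal : ∑ i ∈ Finset.Ioc 0 (8 * q), d i = 0 := by rw [← hIoc]; exact h1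
  have h2 := stmt16_part2 k n q hq hk hn a d hpos hmono hlt hd1 hd2 hdm htotal
  intro r s hr hrs hsm
  have := h2 r s hr hrs hsm
  rwa [hIoc r, hIoc s]
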